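/- Alternative identification formulas for Scenario 2 (Proposition in Supplement H): under conditions (A1)–(A5), (B1) and (B2), each of the following equals E[Y¹ | S = 0]: (i) E[ (μ₁₁(X)/μ₁₀(X)) · ((1−A)/π(X)) · Y | S = 0 ]; (ii) P(S=0)⁻¹ · E[ S · τ(X) · (A/q(X)) · (μ₀₀(X)/μ₁₀(X)) · Y ]; (iii) P(S=0)⁻¹ · E[ S · τ(X) · ((1−A)/(1−q(X))) · (μ₁₁(X)/μ₁₀(X)) · (μ₀₀(X)/μ₁₀(X)) · Y ]. -/

import Mathlib

open MeasureTheory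

/-- `m` is a version of the conditional expectation `E[Z ∣ X; B]`. -/
def IsVersion {Ω E : Type*} [MeasurableSpace Ω] [MeasurableSpace E]
    (P : Measure Ω) (X : Ω → E) (Z : Ω → ℝ) (B : Set Ω) (m : E → ℝ) : Prop :=
  Measurable m ∧
    ∀ h : E → ℝ, Measurable h → (∃ C, ∀ x, |h x| ≤ C) →
      ∫ ω in B, Z ω * h (X ω) ∂P = ∫ ω in B, m (X ω) * h (X ω) ∂P

/-- Conditional mean `E[Z ∣ B]` of a real random variable given an event `B`. -/
noncomputable def condMean {Ω : Type*} [MeasurableSpace Ω]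
    (P : Measure Ω) (Z : Ω → ℝ) (B : Set Ω) : ℝ :=
  (∫ ω in B, Z ω ∂P) / (P B).toReal

open Filter Topology

section Aux

variable {Ω E : Type*} [MeasurableSpace Ω] [MeasurableSpace E]
  {P : Measure Ω} [IsProbabilityMeasure P] {X : Ω → E} {Z : Ω → ℝ} {B : Set Ω} {m : E → ℝ}

lemma trunc_abs_le (n : ℕ) (c : ℝ) : |max (-(n:ℝ)) (min (n:ℝ) c)| ≤ |c| := by
  have hn : (0:ℝ) ≤ n := n.cast_nonneg
  rcases le_total c 0 with h | h
  · rw [min_eq_right (h.trans hn)]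
    have h2 := le_max_right (-(n:ℝ)) c
    have h3 : max (-(n:ℝ)) c ≤ 0 := max_le (by linarith) h
    rw [abs_of_nonpos h3, abs_of_nonpos h]; linarith
  · have h0 : (0:ℝ) ≤ min (n:ℝ) c := le_min hn h
    rw [max_eq_right (by linarith), abs_of_nonneg h0, abs_of_nonneg h]
    exact min_le_right _ _

lemma trunc_bd (n : ℕ) (c : ℝ) : |max (-(n:ℝ)) (min (n:ℝ) c)| ≤ n := by
  have hn : (0:ℝ) ≤ n := n.cast_nonneg
  rw [abs_le]
  exact ⟨le_max_left _ _, max_le (by linarith) (min_le_left _ _)⟩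

lemma trunc_tendsto (c : ℝ) :
    Tendsto (fun n : ℕ => max (-(n:ℝ)) (min (n:ℝ) c)) atTop (nhds c) := by
  apply tendsto_atTop_of_eventually_const (i₀ := ⌈|c|⌉₊)
  intro n hn
  have h1 : |c| ≤ (n:ℝ) := le_trans (Nat.le_ceil _) (by exact_mod_cast hn)
  have h2 := abs_le.mp h1
  rw [min_eq_right h2.2, max_eq_right h2.1]

lemma integrableOn_of_bound {f : Ω → ℝ} (hf : Measurable f) (C : ℝ)
    (h : ∀ ω, |f ω| ≤ C) (B : Set Ω) : IntegrableOn f B P :=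
  (integrable_const C).mono' hf.aestronglyMeasurable
    (Filter.Eventually.of_forall fun ω => by simpa [Real.norm_eq_abs] using h ω)

/-- Equality of integrals against an integrable factor (two-sided integrability). -/
lemma isVersion_integral_eq (hX : Measurable X)
    (hZ : AEStronglyMeasurable Z (P.restrict B))
    (hv : IsVersion P X Z B m) {φ : E → ℝ} (hφ : Measurable φ)
    (h1 : IntegrableOn (fun ω => Z ω * φ (X ω)) B P)
    (h2 : IntegrableOn (fun ω => m (X ω) * φ (X ω)) B P) :
    ∫ ω in B, Z ω * φ (X ω) ∂P = ∫ ω in B, m (X ω) * φ (X ω) ∂P := by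
  obtain ⟨hm, hver⟩ := hv
  set t : ℕ → E → ℝ := fun n x => max (-(n:ℝ)) (min (n:ℝ) (φ x)) with ht
  have htm : ∀ n, Measurable (t n) := fun n =>
    measurable_const.max (measurable_const.min hφ)
  have key : ∀ n, ∫ ω in B, Z ω * t n (X ω) ∂P = ∫ ω in B, m (X ω) * t n (X ω) ∂P :=
    fun n => hver (t n) (htm n) ⟨n, fun x => trunc_bd n (φ x)⟩
  have hL : Tendsto (fun n => ∫ ω in B, Z ω * t n (X ω) ∂P) atTop
      (nhds (∫ ω in B, Z ω * φ (X ω) ∂P)) := by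
    apply tendsto_integral_of_dominated_convergence (fun ω => |Z ω * φ (X ω)|)
    · exact fun n => hZ.mul ((htm n).comp hX).aestronglyMeasurable
    · exact h1.abs
    · intro n
      refine Filter.Eventually.of_forall fun ω => ?_
      rw [Real.norm_eq_abs, abs_mul, abs_mul]
      exact mul_le_mul_of_nonneg_left (trunc_abs_le n (φ (X ω))) (abs_nonneg _)
    · exact Filter.Eventually.of_forall fun ω => (trunc_tendsto (φ (X ω))).const_mul _
  have hR : Tendsto (fun n => ∫ ω in B, m (X ω) * t n (X ω) ∂P) atTop
      (nhds (∫ ω in B, m (X ω) * φ (X ω) ∂P)) := by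
    apply tendsto_integral_of_dominated_convergence (fun ω => |m (X ω) * φ (X ω)|)
    · exact fun n => ((hm.comp hX).mul ((htm n).comp hX)).aestronglyMeasurable
    · exact h2.abs
    · intro n
      refine Filter.Eventually.of_forall fun ω => ?_
      rw [Real.norm_eq_abs, abs_mul, abs_mul]
      exact mul_le_mul_of_nonneg_left (trunc_abs_le n (φ (X ω))) (abs_nonneg _)
    · exact Filter.Eventually.of_forall fun ω => (trunc_tendsto (φ (X ω))).const_mul _
  exact tendsto_nhds_unique (by simpa only [funext key] using hL) hR

/-- Integrability of the m-side from integrability of the Z-side. -/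
lemma isVersion_integrable (hX : Measurable X)
    (hZ : AEStronglyMeasurable Z (P.restrict B))
    (hv : IsVersion P X Z B m) {φ : E → ℝ} (hφ : Measurable φ)
    (h1 : IntegrableOn (fun ω => Z ω * φ (X ω)) B P) :
    IntegrableOn (fun ω => m (X ω) * φ (X ω)) B P := by
  obtain ⟨hm, hver⟩ := hv
  set s : E → ℝ := fun x => if 0 ≤ m x then 1 else -1 with hs
  have hsm : Measurable s := Measurable.ite (measurableSet_le measurable_const hm)
    measurable_const measurable_const
  have hsabs : ∀ x, |s x| ≤ 1 := by
    intro x; rw [hs]; dsimp only; split <;> simp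
  have hms : ∀ x, m x * s x = |m x| := by
    intro x; rw [hs]; dsimp only; split
    · rw [mul_one, abs_of_nonneg ‹_›]
    · rw [abs_of_neg (lt_of_not_ge ‹_›)]; ring
  set c : ℕ → E → ℝ := fun n x => min |φ x| n * (if |m x| ≤ (n:ℝ) then 1 else 0) with hc
  have hcm : ∀ n, Measurable (c n) := fun n =>
    ((hφ.abs).min measurable_const).mul
      (Measurable.ite (measurableSet_le hm.abs measurable_const) measurable_const
        measurable_const)
  have hc_nonneg : ∀ n x, 0 ≤ c n x := fun n x =>
    mul_nonneg (le_min (abs_nonneg _) (n.cast_nonneg)) (by split <;> norm_num)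
  have hc_le_n : ∀ n x, c n x ≤ n := fun n x => by
    calc c n x ≤ min |φ x| n * 1 := by
          apply mul_le_mul_of_nonneg_left _ (le_min (abs_nonneg _) (n.cast_nonneg))
          split <;> norm_num
      _ ≤ (n:ℝ) := by rw [mul_one]; exact min_le_right _ _
  have hc_le_phi : ∀ n x, c n x ≤ |φ x| := fun n x => by
    calc c n x ≤ min |φ x| n * 1 := by
          apply mul_le_mul_of_nonneg_left _ (le_min (abs_nonneg _) (n.cast_nonneg))
          split <;> norm_num
      _ ≤ |φ x| := by rw [mul_one]; exact min_le_left _ _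
  have key : ∀ n : ℕ, ∫ ω in B, Z ω * (s (X ω) * c n (X ω)) ∂P
      = ∫ ω in B, m (X ω) * (s (X ω) * c n (X ω)) ∂P := by
    intro n
    refine hver (fun x => s x * c n x) (hsm.mul (hcm n)) ⟨n, fun x => ?_⟩
    rw [abs_mul]
    calc |s x| * |c n x| ≤ 1 * |c n x| :=
          mul_le_mul_of_nonneg_right (hsabs x) (abs_nonneg _)
      _ = c n x := by rw [one_mul, abs_of_nonneg (hc_nonneg n x)]
      _ ≤ n := hc_le_n n x
  set C : ℝ := ∫ ω in B, |Z ω * φ (X ω)| ∂P with hC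
  have hmside : ∀ n : ℕ, (fun ω => m (X ω) * (s (X ω) * c n (X ω)))
      = fun ω => |m (X ω)| * c n (X ω) := by
    intro n; funext ω; rw [← mul_assoc, hms]
  have habs1 : ∀ (z s' c' φ' : ℝ), |s'| ≤ 1 → 0 ≤ c' → c' ≤ |φ'| →
      |z * (s' * c')| ≤ |z * φ'| := by
    intro z s' c' φ' hs' hc0 hcφ
    have inner : |s' * c'| ≤ |φ'| := by
      rw [abs_mul, abs_of_nonneg hc0]
      calc |s'| * c' ≤ 1 * |φ'| := mul_le_mul hs' hcφ hc0 zero_le_one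
        _ = |φ'| := one_mul _
    calc |z * (s' * c')| = |z| * |s' * c'| := abs_mul _ _
      _ ≤ |z| * |φ'| := mul_le_mul_of_nonneg_left inner (abs_nonneg _)
      _ = |z * φ'| := (abs_mul _ _).symm
  have hZn : ∀ n : ℕ, IntegrableOn (fun ω => Z ω * (s (X ω) * c n (X ω))) B P := by
    intro n
    refine h1.abs.mono' ?_ (Filter.Eventually.of_forall fun ω => ?_)
    · exact hZ.mul ((hsm.comp hX).mul ((hcm n).comp hX)).aestronglyMeasurable
    · rw [Real.norm_eq_abs]
      exact habs1 _ _ _ _ (hsabs _) (hc_nonneg n _) (hc_le_phi n _)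
  have hMn : ∀ n : ℕ, IntegrableOn (fun ω => |m (X ω)| * c n (X ω)) B P := by
    intro n
    refine integrableOn_of_bound ?_ ((n:ℝ) * n) (fun ω => ?_) B
    · exact (hm.comp hX).abs.mul ((hcm n).comp hX)
    · rw [abs_of_nonneg (mul_nonneg (abs_nonneg _) (hc_nonneg n _))]
      rcases le_or_gt (|m (X ω)|) (n:ℝ) with hle | hlt
      · exact mul_le_mul hle (hc_le_n n _) (hc_nonneg n _) (n.cast_nonneg)
      · have hz : c n (X ω) = 0 := by
          show min |φ (X ω)| (n:ℝ) * (if |m (X ω)| ≤ (n:ℝ) then (1:ℝ) else 0) = 0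
          rw [if_neg (not_le.mpr hlt), mul_zero]
        rw [hz, mul_zero]
        positivity
  have hbd : ∀ n : ℕ, ∫ ω in B, |m (X ω)| * c n (X ω) ∂P ≤ C := by
    intro n
    rw [← hmside n, ← key n]
    refine integral_mono (hZn n) h1.abs (fun ω => ?_)
    exact le_trans (le_abs_self _)
      (habs1 _ _ _ _ (hsabs _) (hc_nonneg n _) (hc_le_phi n _))
  refine ⟨((hm.comp hX).mul (hφ.comp hX)).aestronglyMeasurable, ?_⟩
  rw [hasFiniteIntegral_iff_norm]
  have hpt : ∀ ω, ⨆ n : ℕ, ENNReal.ofReal (|m (X ω)| * c n (X ω))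
      = ENNReal.ofReal ‖m (X ω) * φ (X ω)‖ := by
    intro ω
    apply le_antisymm
    · refine iSup_le fun n => ENNReal.ofReal_le_ofReal ?_
      rw [Real.norm_eq_abs, abs_mul]
      exact mul_le_mul_of_nonneg_left (hc_le_phi n _) (abs_nonneg _)
    · set N : ℕ := max ⌈|m (X ω)|⌉₊ ⌈|φ (X ω)|⌉₊ with hN
      refine le_iSup_of_le N (ENNReal.ofReal_le_ofReal ?_)
      have hmN : |m (X ω)| ≤ (N:ℝ) := by
        refine le_trans (Nat.le_ceil _) ?_
        exact_mod_cast le_max_left _ _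
      have hpN : |φ (X ω)| ≤ (N:ℝ) := by
        refine le_trans (Nat.le_ceil _) ?_
        exact_mod_cast le_max_right _ _
      have hcN : c N (X ω) = |φ (X ω)| := by
        show min |φ (X ω)| (N:ℝ) * (if |m (X ω)| ≤ (N:ℝ) then (1:ℝ) else 0) = |φ (X ω)|
        rw [if_pos hmN, min_eq_left hpN, mul_one]
      rw [Real.norm_eq_abs, abs_mul, hcN]
  have hmono : ∀ (n n' : ℕ), n ≤ n' → ∀ ω,
      ENNReal.ofReal (|m (X ω)| * c n (X ω)) ≤ ENNReal.ofReal (|m (X ω)| * c n' (X ω)) := by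
    intro n n' hnn ω
    apply ENNReal.ofReal_le_ofReal
    apply mul_le_mul_of_nonneg_left _ (abs_nonneg _)
    show min |φ (X ω)| (n:ℝ) * (if |m (X ω)| ≤ (n:ℝ) then (1:ℝ) else 0)
      ≤ min |φ (X ω)| (n':ℝ) * (if |m (X ω)| ≤ (n':ℝ) then (1:ℝ) else 0)
    have h1' : min |φ (X ω)| (n:ℝ) ≤ min |φ (X ω)| (n':ℝ) :=
      min_le_min le_rfl (by exact_mod_cast hnn)
    have h2' : (if |m (X ω)| ≤ (n:ℝ) then (1:ℝ) else 0) ≤ if |m (X ω)| ≤ (n':ℝ) then 1 else 0 := by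
      split
      · rw [if_pos (le_trans ‹_› (by exact_mod_cast hnn))]
      · split <;> norm_num
    apply mul_le_mul h1' h2' (by split <;> norm_num) (le_min (abs_nonneg _) (n'.cast_nonneg))
  calc ∫⁻ ω, ENNReal.ofReal ‖m (X ω) * φ (X ω)‖ ∂(P.restrict B)
      = ∫⁻ ω, ⨆ n : ℕ, ENNReal.ofReal (|m (X ω)| * c n (X ω)) ∂(P.restrict B) := by
        exact lintegral_congr fun ω => (hpt ω).symm
    _ = ⨆ n : ℕ, ∫⁻ ω, ENNReal.ofReal (|m (X ω)| * c n (X ω)) ∂(P.restrict B) := by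
        apply lintegral_iSup
        · exact fun n => ENNReal.measurable_ofReal.comp
            ((hm.comp hX).abs.mul ((hcm n).comp hX))
        · exact fun n n' h ω => hmono n n' h ω
    _ ≤ ENNReal.ofReal C := by
        refine iSup_le fun n => ?_
        rw [← ofReal_integral_eq_lintegral_ofReal (hMn n)
          (Filter.Eventually.of_forall fun ω => mul_nonneg (abs_nonneg _) (hc_nonneg n _))]
        exact ENNReal.ofReal_le_ofReal (hbd n)
    _ < ⊤ := ENNReal.ofReal_lt_top

/-- From a version for `Z` (with `Z` bounded) to a version for `1 - Z`. -/
lemma isVersion_one_sub (hX : Measurable X)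
    (hZm : AEStronglyMeasurable Z (P.restrict B)) (hZbd : ∀ ω, |Z ω| ≤ 1)
    (hv : IsVersion P X Z B m) :
    IsVersion P X (fun ω => 1 - Z ω) B (fun x => 1 - m x) := by
  refine ⟨measurable_const.sub hv.1, ?_⟩
  rintro h hh ⟨C, hC⟩
  have hhX : IntegrableOn (fun ω => h (X ω)) B P :=
    integrableOn_of_bound (hh.comp hX) C (fun ω => hC _) B
  have hZh : IntegrableOn (fun ω => Z ω * h (X ω)) B P := by
    refine Integrable.mono' (g := fun _ => C) (integrable_const C)
      (hZm.mul (hh.comp hX).aestronglyMeasurable)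
      (Filter.Eventually.of_forall fun ω => ?_)
    rw [Real.norm_eq_abs, abs_mul]
    calc |Z ω| * |h (X ω)| ≤ 1 * C := mul_le_mul (hZbd ω) (hC _) (abs_nonneg _) zero_le_one
      _ = C := one_mul _
  have hmh : IntegrableOn (fun ω => m (X ω) * h (X ω)) B P :=
    isVersion_integrable hX hZm hv hh hZh
  have e1 : ∫ ω in B, (1 - Z ω) * h (X ω) ∂P
      = ∫ ω in B, h (X ω) ∂P - ∫ ω in B, Z ω * h (X ω) ∂P := by
    rw [← integral_sub hhX hZh]
    congr 1; funext ω; ring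
  have e2 : ∫ ω in B, (1 - m (X ω)) * h (X ω) ∂P
      = ∫ ω in B, h (X ω) ∂P - ∫ ω in B, m (X ω) * h (X ω) ∂P := by
    rw [← integral_sub hhX hmh]
    congr 1; funext ω; ring
  show ∫ ω in B, (1 - Z ω) * h (X ω) ∂P = ∫ ω in B, (1 - m (X ω)) * h (X ω) ∂P
  rw [e1, e2, hv.2 h hh ⟨C, hC⟩]

end Aux

section Main

lemma mul_indicator_eq' {Ω : Type*} (c : Ω → ℝ) (hc : ∀ ω, c ω = 0 ∨ c ω = 1) (f : Ω → ℝ) :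
    (fun ω => c ω * f ω) = ({ω | c ω = 1}).indicator f := by
  funext ω
  rcases hc ω with h | h <;> simp [Set.indicator_apply, h]

lemma one_sub_mul_indicator_eq' {Ω : Type*} (c : Ω → ℝ) (hc : ∀ ω, c ω = 0 ∨ c ω = 1)
    (f : Ω → ℝ) : (fun ω => (1 - c ω) * f ω) = ({ω | c ω = 0}).indicator f := by
  funext ω
  rcases hc ω with h | h <;> simp [Set.indicator_apply, h]

lemma cancel1' (a c u : ℝ) (hc : c ≠ 0) : c * (a / c * u) = a * u := by
  field_simp

lemma cancel2' (a b c u : ℝ) (hc : c ≠ 0) : c * (b * (a / c * u)) = a * (b * u) := by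
  field_simp

lemma cancel3' (a b c u v : ℝ) (hc : c ≠ 0) : c * (b * (a / c * u * v)) = a * (b * u * v) := by
  field_simp

end Main

set_option maxHeartbeats 2000000

/-- Alternative identification formulas for Scenario 2 (Supplement H).  Under
(A1)–(A5), (B1), (B2), with `τ = (1−g)/g`, each of the following equals
`E[Y¹ ∣ S = 0]`:
(i) `E[(μ₁₁(X)/μ₁₀(X))·((1−A)/π(X))·Y ∣ S = 0]`;
(ii) `P(S=0)⁻¹·E[S·τ(X)·(A/q(X))·(μ₀₀(X)/μ₁₀(X))·Y]`;
(iii) `P(S=0)⁻¹·E[S·τ(X)·((1−A)/(1−q(X)))·(μ₁₁(X)/μ₁₀(X))·(μ₀₀(X)/μ₁₀(X))·Y]`. -/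
theorem alternative_identification_scenario2
    {Ω E : Type*} [MeasurableSpace Ω] [MeasurableSpace E]
    (P : Measure Ω) [IsProbabilityMeasure P]
    (X : Ω → E) (S A Y Y0 Y1 : Ω → ℝ)
    (hX : Measurable X) (hS : Measurable S) (hA : Measurable A) (hY : Measurable Y)
    (hS01 : ∀ ω, S ω = 0 ∨ S ω = 1) (hA01 : ∀ ω, A ω = 0 ∨ A ω = 1)
    (hPS0 : 0 < P {ω | S ω = 0})
    (hPS1A1 : 0 < P {ω | S ω = 1 ∧ A ω = 1})
    (hPS1A0 : 0 < P {ω | S ω = 1 ∧ A ω = 0})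
    (hYint : Integrable Y P) (hY0int : Integrable Y0 P) (hY1int : Integrable Y1 P)
    (g q μ11 μ10 μ00 ρ1 π : E → ℝ)
    (hg : IsVersion P X S Set.univ g)
    (hg01 : ∀ᵐ ω ∂P, 0 < g (X ω) ∧ g (X ω) < 1)
    (hq : IsVersion P X A {ω | S ω = 1} q)
    -- (A1)
    (hA1 : ∀ᵐ ω ∂P, Y ω = A ω * Y1 ω + (1 - A ω) * Y0 ω)
    -- (A2)
    (hμ11obs : IsVersion P X Y {ω | S ω = 1 ∧ A ω = 1} μ11)
    (hμ11cf : IsVersion P X Y1 {ω | S ω = 1} μ11)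
    (hμ10obs : IsVersion P X Y {ω | S ω = 1 ∧ A ω = 0} μ10)
    (hμ10cf : IsVersion P X Y0 {ω | S ω = 1} μ10)
    -- (A3)
    (hA3 : ∀ᵐ ω ∂P, S ω = 1 → 0 < q (X ω) ∧ q (X ω) < 1)
    -- (A5)
    (hA5 : ∀ᵐ ω ∂P, 0 < g (X ω))
    -- (B1, combined with A1)
    (hPS0A0 : 0 < P {ω | S ω = 0 ∧ A ω = 0})
    (hμ00obs : IsVersion P X Y {ω | S ω = 0 ∧ A ω = 0} μ00)
    (hμ00cf : IsVersion P X Y0 {ω | S ω = 0} μ00)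
    -- (A4)
    (hρ1 : IsVersion P X Y1 {ω | S ω = 0} ρ1)
    (hA4 : ∀ᵐ ω ∂P, S ω = 0 →
      μ10 (X ω) ≠ 0 ∧ μ00 (X ω) ≠ 0 ∧
        μ11 (X ω) / μ10 (X ω) = ρ1 (X ω) / μ00 (X ω))
    -- (B2)
    (hπ : IsVersion P X (fun ω => 1 - A ω) {ω | S ω = 0} π)
    (hπ01 : ∀ᵐ ω ∂P, S ω = 0 → 0 < π (X ω) ∧ π (X ω) < 1)
    -- integrability of the expressions inside the expectations below
    (hint1 : Integrable (fun ω =>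
      μ11 (X ω) / μ10 (X ω) * ((1 - A ω) / π (X ω)) * Y ω) P)
    (hint2 : Integrable (fun ω =>
      S ω * ((1 - g (X ω)) / g (X ω)) * (A ω / q (X ω)) *
        (μ00 (X ω) / μ10 (X ω)) * Y ω) P)
    (hint3 : Integrable (fun ω =>
      S ω * ((1 - g (X ω)) / g (X ω)) * ((1 - A ω) / (1 - q (X ω))) *
        (μ11 (X ω) / μ10 (X ω)) * (μ00 (X ω) / μ10 (X ω)) * Y ω) P) :
    condMean P Y1 {ω | S ω = 0}
      = condMean P (fun ω => μ11 (X ω) / μ10 (X ω) * ((1 - A ω) / π (X ω)) * Y ω)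
          {ω | S ω = 0} ∧
    condMean P Y1 {ω | S ω = 0}
      = (P {ω | S ω = 0}).toReal⁻¹ *
          ∫ ω, S ω * ((1 - g (X ω)) / g (X ω)) * (A ω / q (X ω)) *
            (μ00 (X ω) / μ10 (X ω)) * Y ω ∂P ∧
    condMean P Y1 {ω | S ω = 0}
      = (P {ω | S ω = 0}).toReal⁻¹ *
          ∫ ω, S ω * ((1 - g (X ω)) / g (X ω)) * ((1 - A ω) / (1 - q (X ω))) *
            (μ11 (X ω) / μ10 (X ω)) * (μ00 (X ω) / μ10 (X ω)) * Y ω ∂P := by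
  classical
  -- measurable sets
  have hB0 : MeasurableSet {ω | S ω = 0} := hS (measurableSet_singleton 0)
  have hB1 : MeasurableSet {ω | S ω = 1} := hS (measurableSet_singleton 1)
  have hCA0 : MeasurableSet {ω | A ω = 0} := hA (measurableSet_singleton 0)
  have hCA1 : MeasurableSet {ω | A ω = 1} := hA (measurableSet_singleton 1)
  have hB00 : MeasurableSet {ω | S ω = 0 ∧ A ω = 0} := hB0.inter hCA0
  have hB11 : MeasurableSet {ω | S ω = 1 ∧ A ω = 1} := hB1.inter hCA1
  have hB10 : MeasurableSet {ω | S ω = 1 ∧ A ω = 0} := hB1.inter hCA0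
  -- measurability of the E-side functions
  have hgm : Measurable g := hg.1
  have hqm : Measurable q := hq.1
  have hμ11m : Measurable μ11 := hμ11obs.1
  have hμ10m : Measurable μ10 := hμ10obs.1
  have hμ00m : Measurable μ00 := hμ00obs.1
  have hπm : Measurable π := hπ.1
  have hτm : Measurable (fun x => (1 - g x) / g x) := (measurable_const.sub hgm).div hgm
  have hkm : Measurable (fun x => μ00 x * (μ11 x / μ10 x)) := hμ00m.mul (hμ11m.div hμ10m)
  -- ρ1 facts on {S = 0}
  have hY1B0 : IntegrableOn (fun ω => Y1 ω * (fun _ : E => (1:ℝ)) (X ω)) {ω | S ω = 0} P := by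
    simpa using hY1int.integrableOn
  have hρ1int : IntegrableOn (fun ω => ρ1 (X ω)) {ω | S ω = 0} P := by
    have := isVersion_integrable hX (hY1int.1.restrict) hρ1 measurable_const hY1B0
    simpa using this
  have hρ1eq : ∫ ω in {ω | S ω = 0}, Y1 ω ∂P = ∫ ω in {ω | S ω = 0}, ρ1 (X ω) ∂P := by
    have := hρ1.2 (fun _ => 1) measurable_const ⟨1, fun x => by norm_num⟩
    simpa using this
  -- the key function k(x) = μ00(x) * (μ11(x)/μ10(x)) on {S = 0}
  have hA4' : ∀ᵐ ω ∂P, S ω = 0 → μ00 (X ω) * (μ11 (X ω) / μ10 (X ω)) = ρ1 (X ω) := by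
    filter_upwards [hA4] with ω h h0
    obtain ⟨h10, h00, heq⟩ := h h0
    rw [heq, mul_comm, div_mul_cancel₀ _ h00]
  have hkeqB0 : ∫ ω in {ω | S ω = 0}, μ00 (X ω) * (μ11 (X ω) / μ10 (X ω)) ∂P
      = ∫ ω in {ω | S ω = 0}, ρ1 (X ω) ∂P :=
    setIntegral_congr_ae hB0 (hA4'.mono fun ω h hmem => h hmem)
  have hkB0int : IntegrableOn (fun ω => μ00 (X ω) * (μ11 (X ω) / μ10 (X ω))) {ω | S ω = 0} P :=
    hρ1int.congr ((ae_restrict_iff' hB0).mpr (hA4'.mono fun ω h hmem => (h hmem).symm))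
  -- the common tail : ∫_{S=1} τ(X) k(X) = ∫_{S=0} Y1
  have tail : IntegrableOn
        (fun ω => (1 - g (X ω)) / g (X ω) * (μ00 (X ω) * (μ11 (X ω) / μ10 (X ω))))
        {ω | S ω = 1} P →
      ∫ ω in {ω | S ω = 1},
          (1 - g (X ω)) / g (X ω) * (μ00 (X ω) * (μ11 (X ω) / μ10 (X ω))) ∂P
        = ∫ ω in {ω | S ω = 0}, Y1 ω ∂P := by
    intro hτk
    have hφm : Measurable fun x => (1 - g x) / g x * (μ00 x * (μ11 x / μ10 x)) :=
      hτm.mul hkm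
    have hind : (fun ω => S ω * ((1 - g (X ω)) / g (X ω) * (μ00 (X ω) * (μ11 (X ω) / μ10 (X ω)))))
        = ({ω | S ω = 1}).indicator
          (fun ω => (1 - g (X ω)) / g (X ω) * (μ00 (X ω) * (μ11 (X ω) / μ10 (X ω)))) :=
      mul_indicator_eq' S hS01 _
    have hSint : Integrable
        (fun ω => S ω * ((1 - g (X ω)) / g (X ω) * (μ00 (X ω) * (μ11 (X ω) / μ10 (X ω))))) P := by
      rw [hind]; exact (integrable_indicator_iff hB1).mpr hτk
    have e0 : ∫ ω, S ω * ((1 - g (X ω)) / g (X ω) * (μ00 (X ω) * (μ11 (X ω) / μ10 (X ω)))) ∂P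
        = ∫ ω in {ω | S ω = 1},
            (1 - g (X ω)) / g (X ω) * (μ00 (X ω) * (μ11 (X ω) / μ10 (X ω))) ∂P := by
      rw [hind]; exact integral_indicator hB1
    have hgτk : IntegrableOn
        (fun ω => g (X ω) * ((1 - g (X ω)) / g (X ω) * (μ00 (X ω) * (μ11 (X ω) / μ10 (X ω)))))
        Set.univ P :=
      isVersion_integrable (Z := S) (m := g)
        (φ := fun x => (1 - g x) / g x * (μ00 x * (μ11 x / μ10 x)))
        hX (hS.aestronglyMeasurable.restrict) hg hφm (integrableOn_univ.mpr hSint)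
    have e1 : ∫ ω in Set.univ,
          S ω * ((1 - g (X ω)) / g (X ω) * (μ00 (X ω) * (μ11 (X ω) / μ10 (X ω)))) ∂P
        = ∫ ω in Set.univ,
          g (X ω) * ((1 - g (X ω)) / g (X ω) * (μ00 (X ω) * (μ11 (X ω) / μ10 (X ω)))) ∂P :=
      isVersion_integral_eq (Z := S) (m := g)
        (φ := fun x => (1 - g x) / g x * (μ00 x * (μ11 x / μ10 x)))
        hX (hS.aestronglyMeasurable.restrict) hg hφm (integrableOn_univ.mpr hSint) hgτk
    have hae_g : ∀ᵐ ω ∂P,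
        g (X ω) * ((1 - g (X ω)) / g (X ω) * (μ00 (X ω) * (μ11 (X ω) / μ10 (X ω))))
          = (1 - g (X ω)) * (μ00 (X ω) * (μ11 (X ω) / μ10 (X ω))) := by
      filter_upwards [hg01] with ω h
      exact cancel1' _ _ _ h.1.ne'
    have e2 : ∫ ω, g (X ω) * ((1 - g (X ω)) / g (X ω) * (μ00 (X ω) * (μ11 (X ω) / μ10 (X ω)))) ∂P
        = ∫ ω, (1 - g (X ω)) * (μ00 (X ω) * (μ11 (X ω) / μ10 (X ω))) ∂P :=
      integral_congr_ae hae_g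
    have hgS : IsVersion P X (fun ω => 1 - S ω) Set.univ (fun x => 1 - g x) :=
      isVersion_one_sub hX (hS.aestronglyMeasurable.restrict)
        (fun ω => by rcases hS01 ω with h | h <;> simp [h]) hg
    have hind0 : (fun ω => (1 - S ω) * (μ00 (X ω) * (μ11 (X ω) / μ10 (X ω))))
        = ({ω | S ω = 0}).indicator (fun ω => μ00 (X ω) * (μ11 (X ω) / μ10 (X ω))) :=
      one_sub_mul_indicator_eq' S hS01 _
    have h1Sk : Integrable (fun ω => (1 - S ω) * (μ00 (X ω) * (μ11 (X ω) / μ10 (X ω)))) P := by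
      rw [hind0]; exact (integrable_indicator_iff hB0).mpr hkB0int
    have h1gk : IntegrableOn
        (fun ω => (1 - g (X ω)) * (μ00 (X ω) * (μ11 (X ω) / μ10 (X ω)))) Set.univ P :=
      isVersion_integrable (Z := fun ω => 1 - S ω) (m := fun x => 1 - g x)
        (φ := fun x => μ00 x * (μ11 x / μ10 x))
        hX ((measurable_const.sub hS).aestronglyMeasurable.restrict) hgS hkm
        (integrableOn_univ.mpr h1Sk)
    have e3 : ∫ ω in Set.univ, (1 - S ω) * (μ00 (X ω) * (μ11 (X ω) / μ10 (X ω))) ∂P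
        = ∫ ω in Set.univ, (1 - g (X ω)) * (μ00 (X ω) * (μ11 (X ω) / μ10 (X ω))) ∂P :=
      isVersion_integral_eq (Z := fun ω => 1 - S ω) (m := fun x => 1 - g x)
        (φ := fun x => μ00 x * (μ11 x / μ10 x))
        hX ((measurable_const.sub hS).aestronglyMeasurable.restrict) hgS hkm
        (integrableOn_univ.mpr h1Sk) h1gk
    have e4 : ∫ ω, (1 - S ω) * (μ00 (X ω) * (μ11 (X ω) / μ10 (X ω))) ∂P
        = ∫ ω in {ω | S ω = 0}, μ00 (X ω) * (μ11 (X ω) / μ10 (X ω)) ∂P := by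
      rw [hind0]; exact integral_indicator hB0
    calc ∫ ω in {ω | S ω = 1},
            (1 - g (X ω)) / g (X ω) * (μ00 (X ω) * (μ11 (X ω) / μ10 (X ω))) ∂P
        = ∫ ω, S ω * ((1 - g (X ω)) / g (X ω) * (μ00 (X ω) * (μ11 (X ω) / μ10 (X ω)))) ∂P :=
          e0.symm
      _ = ∫ ω in Set.univ,
            S ω * ((1 - g (X ω)) / g (X ω) * (μ00 (X ω) * (μ11 (X ω) / μ10 (X ω)))) ∂P :=
          setIntegral_univ.symm
      _ = ∫ ω in Set.univ,
            g (X ω) * ((1 - g (X ω)) / g (X ω) * (μ00 (X ω) * (μ11 (X ω) / μ10 (X ω)))) ∂P := e1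
      _ = ∫ ω, g (X ω) * ((1 - g (X ω)) / g (X ω) * (μ00 (X ω) * (μ11 (X ω) / μ10 (X ω)))) ∂P :=
          setIntegral_univ
      _ = ∫ ω, (1 - g (X ω)) * (μ00 (X ω) * (μ11 (X ω) / μ10 (X ω))) ∂P := e2
      _ = ∫ ω in Set.univ, (1 - g (X ω)) * (μ00 (X ω) * (μ11 (X ω) / μ10 (X ω))) ∂P :=
          setIntegral_univ.symm
      _ = ∫ ω in Set.univ, (1 - S ω) * (μ00 (X ω) * (μ11 (X ω) / μ10 (X ω))) ∂P := e3.symm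
      _ = ∫ ω, (1 - S ω) * (μ00 (X ω) * (μ11 (X ω) / μ10 (X ω))) ∂P := setIntegral_univ
      _ = ∫ ω in {ω | S ω = 0}, μ00 (X ω) * (μ11 (X ω) / μ10 (X ω)) ∂P := e4
      _ = ∫ ω in {ω | S ω = 0}, ρ1 (X ω) ∂P := hkeqB0
      _ = ∫ ω in {ω | S ω = 0}, Y1 ω ∂P := hρ1eq.symm
  -- ===== chain (i) =====
  have hφ1m : Measurable fun x => μ11 x / μ10 x / π x := (hμ11m.div hμ10m).div hπm
  have hind_i : (fun ω => μ11 (X ω) / μ10 (X ω) * ((1 - A ω) / π (X ω)) * Y ω)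
      = ({ω | A ω = 0}).indicator (fun ω => Y ω * (μ11 (X ω) / μ10 (X ω) / π (X ω))) := by
    funext ω
    rcases hA01 ω with h | h
    · rw [Set.indicator_apply, if_pos (show ω ∈ {ω | A ω = 0} from h), h]; ring
    · rw [Set.indicator_apply, if_neg (by simp [Set.mem_setOf_eq, h]), h]; ring
  have e_i0 : ∫ ω in {ω | S ω = 0}, μ11 (X ω) / μ10 (X ω) * ((1 - A ω) / π (X ω)) * Y ω ∂P
      = ∫ ω in {ω | S ω = 0 ∧ A ω = 0}, Y ω * (μ11 (X ω) / μ10 (X ω) / π (X ω)) ∂P := by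
    rw [hind_i, setIntegral_indicator hCA0]
    rfl
  have h_i1 : IntegrableOn (fun ω => Y ω * (μ11 (X ω) / μ10 (X ω) / π (X ω)))
      {ω | S ω = 0 ∧ A ω = 0} P := by
    refine (hint1.integrableOn).congr ((ae_restrict_iff' hB00).mpr
      (Filter.Eventually.of_forall fun ω hω => ?_))
    simp only [hω.2]; ring
  have h_i2 : IntegrableOn (fun ω => μ00 (X ω) * (μ11 (X ω) / μ10 (X ω) / π (X ω)))
      {ω | S ω = 0 ∧ A ω = 0} P :=
    isVersion_integrable (Z := Y) (m := μ00) (φ := fun x => μ11 x / μ10 x / π x)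
      hX (hY.aestronglyMeasurable.restrict) hμ00obs hφ1m h_i1
  have e_i1 : ∫ ω in {ω | S ω = 0 ∧ A ω = 0}, Y ω * (μ11 (X ω) / μ10 (X ω) / π (X ω)) ∂P
      = ∫ ω in {ω | S ω = 0 ∧ A ω = 0}, μ00 (X ω) * (μ11 (X ω) / μ10 (X ω) / π (X ω)) ∂P :=
    isVersion_integral_eq (Z := Y) (m := μ00) (φ := fun x => μ11 x / μ10 x / π x)
      hX (hY.aestronglyMeasurable.restrict) hμ00obs hφ1m h_i1 h_i2
  have hψ1m : Measurable fun x => μ00 x * (μ11 x / μ10 x / π x) := hμ00m.mul hφ1m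
  have hind_i2 : (fun ω => (1 - A ω) * (μ00 (X ω) * (μ11 (X ω) / μ10 (X ω) / π (X ω))))
      = ({ω | A ω = 0}).indicator (fun ω => μ00 (X ω) * (μ11 (X ω) / μ10 (X ω) / π (X ω))) :=
    one_sub_mul_indicator_eq' A hA01 _
  have e_i2 : ∫ ω in {ω | S ω = 0}, (1 - A ω) * (μ00 (X ω) * (μ11 (X ω) / μ10 (X ω) / π (X ω))) ∂P
      = ∫ ω in {ω | S ω = 0 ∧ A ω = 0}, μ00 (X ω) * (μ11 (X ω) / μ10 (X ω) / π (X ω)) ∂P := by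
    rw [hind_i2, setIntegral_indicator hCA0]
    rfl
  have h_i3 : IntegrableOn (fun ω => (1 - A ω) * (μ00 (X ω) * (μ11 (X ω) / μ10 (X ω) / π (X ω))))
      {ω | S ω = 0} P := by
    rw [hind_i2]
    refine (integrable_indicator_iff hCA0).mpr ?_
    rw [IntegrableOn, Measure.restrict_restrict hCA0,
      show {ω | A ω = 0} ∩ {ω | S ω = 0} = {ω | S ω = 0 ∧ A ω = 0} from
        by ext ω; exact ⟨fun h => ⟨h.2, h.1⟩, fun h => ⟨h.2, h.1⟩⟩]
    exact h_i2
  have h_i4 : IntegrableOn (fun ω => π (X ω) * (μ00 (X ω) * (μ11 (X ω) / μ10 (X ω) / π (X ω))))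
      {ω | S ω = 0} P :=
    isVersion_integrable (Z := fun ω => 1 - A ω) (m := π)
      (φ := fun x => μ00 x * (μ11 x / μ10 x / π x))
      hX ((measurable_const.sub hA).aestronglyMeasurable.restrict) hπ hψ1m h_i3
  have e_i3 : ∫ ω in {ω | S ω = 0}, (1 - A ω) * (μ00 (X ω) * (μ11 (X ω) / μ10 (X ω) / π (X ω))) ∂P
      = ∫ ω in {ω | S ω = 0}, π (X ω) * (μ00 (X ω) * (μ11 (X ω) / μ10 (X ω) / π (X ω))) ∂P :=
    isVersion_integral_eq (Z := fun ω => 1 - A ω) (m := π)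
      (φ := fun x => μ00 x * (μ11 x / μ10 x / π x))
      hX ((measurable_const.sub hA).aestronglyMeasurable.restrict) hπ hψ1m h_i3 h_i4
  have e_i4 : ∫ ω in {ω | S ω = 0}, π (X ω) * (μ00 (X ω) * (μ11 (X ω) / μ10 (X ω) / π (X ω))) ∂P
      = ∫ ω in {ω | S ω = 0}, ρ1 (X ω) ∂P := by
    refine setIntegral_congr_ae hB0 ?_
    filter_upwards [hπ01, hA4] with ω h1 h2 hmem
    obtain ⟨h10, h00, heq⟩ := h2 hmem
    have hπ0 : π (X ω) ≠ 0 := (h1 hmem).1.ne'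
    rw [heq]
    field_simp
  have num1 : ∫ ω in {ω | S ω = 0}, μ11 (X ω) / μ10 (X ω) * ((1 - A ω) / π (X ω)) * Y ω ∂P
      = ∫ ω in {ω | S ω = 0}, Y1 ω ∂P := by
    rw [e_i0, e_i1, ← e_i2, e_i3, e_i4, ← hρ1eq]
  -- ===== chain (ii) =====
  have hφ2m : Measurable fun x => (1 - g x) / g x / q x * (μ00 x / μ10 x) :=
    (hτm.div hqm).mul (hμ00m.div hμ10m)
  have hind2 : (fun ω => S ω * ((1 - g (X ω)) / g (X ω)) * (A ω / q (X ω)) *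
        (μ00 (X ω) / μ10 (X ω)) * Y ω)
      = ({ω | S ω = 1 ∧ A ω = 1}).indicator
          (fun ω => Y ω * ((1 - g (X ω)) / g (X ω) / q (X ω) * (μ00 (X ω) / μ10 (X ω)))) := by
    funext ω
    rcases hS01 ω with hs | hs
    · rw [Set.indicator_apply, if_neg (by simp [Set.mem_setOf_eq, hs]), hs]; ring
    · rcases hA01 ω with ha | ha
      · rw [Set.indicator_apply, if_neg (by simp [Set.mem_setOf_eq, ha]), ha]; ring
      · rw [Set.indicator_apply,
          if_pos (show ω ∈ {ω | S ω = 1 ∧ A ω = 1} from ⟨hs, ha⟩), hs, ha]; ring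
  have e_20 : ∫ ω, S ω * ((1 - g (X ω)) / g (X ω)) * (A ω / q (X ω)) *
        (μ00 (X ω) / μ10 (X ω)) * Y ω ∂P
      = ∫ ω in {ω | S ω = 1 ∧ A ω = 1},
          Y ω * ((1 - g (X ω)) / g (X ω) / q (X ω) * (μ00 (X ω) / μ10 (X ω))) ∂P := by
    rw [hind2]; exact integral_indicator hB11
  have h_21 : IntegrableOn
      (fun ω => Y ω * ((1 - g (X ω)) / g (X ω) / q (X ω) * (μ00 (X ω) / μ10 (X ω))))
      {ω | S ω = 1 ∧ A ω = 1} P := by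
    have h' := hint2
    rw [hind2] at h'
    exact (integrable_indicator_iff hB11).mp h'
  have h_22 : IntegrableOn
      (fun ω => μ11 (X ω) * ((1 - g (X ω)) / g (X ω) / q (X ω) * (μ00 (X ω) / μ10 (X ω))))
      {ω | S ω = 1 ∧ A ω = 1} P :=
    isVersion_integrable (Z := Y) (m := μ11)
      (φ := fun x => (1 - g x) / g x / q x * (μ00 x / μ10 x))
      hX (hY.aestronglyMeasurable.restrict) hμ11obs hφ2m h_21
  have e_21 : ∫ ω in {ω | S ω = 1 ∧ A ω = 1},
        Y ω * ((1 - g (X ω)) / g (X ω) / q (X ω) * (μ00 (X ω) / μ10 (X ω))) ∂P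
      = ∫ ω in {ω | S ω = 1 ∧ A ω = 1},
        μ11 (X ω) * ((1 - g (X ω)) / g (X ω) / q (X ω) * (μ00 (X ω) / μ10 (X ω))) ∂P :=
    isVersion_integral_eq (Z := Y) (m := μ11)
      (φ := fun x => (1 - g x) / g x / q x * (μ00 x / μ10 x))
      hX (hY.aestronglyMeasurable.restrict) hμ11obs hφ2m h_21 h_22
  have hψ2m : Measurable fun x => μ11 x * ((1 - g x) / g x / q x * (μ00 x / μ10 x)) :=
    hμ11m.mul hφ2m
  have hind21 : (fun ω => A ω *
        (μ11 (X ω) * ((1 - g (X ω)) / g (X ω) / q (X ω) * (μ00 (X ω) / μ10 (X ω)))))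
      = ({ω | A ω = 1}).indicator
          (fun ω => μ11 (X ω) * ((1 - g (X ω)) / g (X ω) / q (X ω) * (μ00 (X ω) / μ10 (X ω)))) :=
    mul_indicator_eq' A hA01 _
  have e_22 : ∫ ω in {ω | S ω = 1},
        A ω * (μ11 (X ω) * ((1 - g (X ω)) / g (X ω) / q (X ω) * (μ00 (X ω) / μ10 (X ω)))) ∂P
      = ∫ ω in {ω | S ω = 1 ∧ A ω = 1},
        μ11 (X ω) * ((1 - g (X ω)) / g (X ω) / q (X ω) * (μ00 (X ω) / μ10 (X ω))) ∂P := by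
    rw [hind21, setIntegral_indicator hCA1]
    rfl
  have h_23 : IntegrableOn (fun ω => A ω *
      (μ11 (X ω) * ((1 - g (X ω)) / g (X ω) / q (X ω) * (μ00 (X ω) / μ10 (X ω)))))
      {ω | S ω = 1} P := by
    rw [hind21]
    refine (integrable_indicator_iff hCA1).mpr ?_
    rw [IntegrableOn, Measure.restrict_restrict hCA1,
      show {ω | A ω = 1} ∩ {ω | S ω = 1} = {ω | S ω = 1 ∧ A ω = 1} from
        by ext ω; exact ⟨fun h => ⟨h.2, h.1⟩, fun h => ⟨h.2, h.1⟩⟩]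
    exact h_22
  have h_24 : IntegrableOn (fun ω => q (X ω) *
      (μ11 (X ω) * ((1 - g (X ω)) / g (X ω) / q (X ω) * (μ00 (X ω) / μ10 (X ω)))))
      {ω | S ω = 1} P :=
    isVersion_integrable (Z := A) (m := q)
      (φ := fun x => μ11 x * ((1 - g x) / g x / q x * (μ00 x / μ10 x)))
      hX (hA.aestronglyMeasurable.restrict) hq hψ2m h_23
  have e_23 : ∫ ω in {ω | S ω = 1},
        A ω * (μ11 (X ω) * ((1 - g (X ω)) / g (X ω) / q (X ω) * (μ00 (X ω) / μ10 (X ω)))) ∂P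
      = ∫ ω in {ω | S ω = 1},
        q (X ω) * (μ11 (X ω) * ((1 - g (X ω)) / g (X ω) / q (X ω) * (μ00 (X ω) / μ10 (X ω)))) ∂P :=
    isVersion_integral_eq (Z := A) (m := q)
      (φ := fun x => μ11 x * ((1 - g x) / g x / q x * (μ00 x / μ10 x)))
      hX (hA.aestronglyMeasurable.restrict) hq hψ2m h_23 h_24
  have hae2 : ∀ᵐ ω ∂P, ω ∈ {ω | S ω = 1} →
      q (X ω) * (μ11 (X ω) * ((1 - g (X ω)) / g (X ω) / q (X ω) * (μ00 (X ω) / μ10 (X ω))))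
        = (1 - g (X ω)) / g (X ω) * (μ00 (X ω) * (μ11 (X ω) / μ10 (X ω))) := by
    filter_upwards [hA3] with ω h hmem
    rw [cancel2' _ _ _ _ (h hmem).1.ne']
    ring
  have e_24 : ∫ ω in {ω | S ω = 1},
        q (X ω) * (μ11 (X ω) * ((1 - g (X ω)) / g (X ω) / q (X ω) * (μ00 (X ω) / μ10 (X ω)))) ∂P
      = ∫ ω in {ω | S ω = 1},
        (1 - g (X ω)) / g (X ω) * (μ00 (X ω) * (μ11 (X ω) / μ10 (X ω))) ∂P :=
    setIntegral_congr_ae hB1 hae2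
  have h_25 : IntegrableOn
      (fun ω => (1 - g (X ω)) / g (X ω) * (μ00 (X ω) * (μ11 (X ω) / μ10 (X ω))))
      {ω | S ω = 1} P :=
    h_24.congr ((ae_restrict_iff' hB1).mpr hae2)
  have num2 : ∫ ω, S ω * ((1 - g (X ω)) / g (X ω)) * (A ω / q (X ω)) *
        (μ00 (X ω) / μ10 (X ω)) * Y ω ∂P
      = ∫ ω in {ω | S ω = 0}, Y1 ω ∂P := by
    rw [e_20, e_21, ← e_22, e_23, e_24]
    exact tail h_25
  -- ===== chain (iii) =====
  have hq1 : IsVersion P X (fun ω => 1 - A ω) {ω | S ω = 1} (fun x => 1 - q x) :=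
    isVersion_one_sub hX (hA.aestronglyMeasurable.restrict)
      (fun ω => by rcases hA01 ω with h | h <;> simp [h]) hq
  have hφ3m : Measurable fun x =>
      (1 - g x) / g x / (1 - q x) * (μ11 x / μ10 x) * (μ00 x / μ10 x) :=
    ((hτm.div (measurable_const.sub hqm)).mul (hμ11m.div hμ10m)).mul (hμ00m.div hμ10m)
  have hind3 : (fun ω => S ω * ((1 - g (X ω)) / g (X ω)) * ((1 - A ω) / (1 - q (X ω))) *
        (μ11 (X ω) / μ10 (X ω)) * (μ00 (X ω) / μ10 (X ω)) * Y ω)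
      = ({ω | S ω = 1 ∧ A ω = 0}).indicator
          (fun ω => Y ω * ((1 - g (X ω)) / g (X ω) / (1 - q (X ω)) * (μ11 (X ω) / μ10 (X ω)) *
            (μ00 (X ω) / μ10 (X ω)))) := by
    funext ω
    rcases hS01 ω with hs | hs
    · rw [Set.indicator_apply, if_neg (by simp [Set.mem_setOf_eq, hs]), hs]; ring
    · rcases hA01 ω with ha | ha
      · rw [Set.indicator_apply,
          if_pos (show ω ∈ {ω | S ω = 1 ∧ A ω = 0} from ⟨hs, ha⟩), hs, ha]; ring
      · rw [Set.indicator_apply, if_neg (by simp [Set.mem_setOf_eq, ha]), ha]; ring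
  have e_30 : ∫ ω, S ω * ((1 - g (X ω)) / g (X ω)) * ((1 - A ω) / (1 - q (X ω))) *
        (μ11 (X ω) / μ10 (X ω)) * (μ00 (X ω) / μ10 (X ω)) * Y ω ∂P
      = ∫ ω in {ω | S ω = 1 ∧ A ω = 0},
          Y ω * ((1 - g (X ω)) / g (X ω) / (1 - q (X ω)) * (μ11 (X ω) / μ10 (X ω)) *
            (μ00 (X ω) / μ10 (X ω))) ∂P := by
    rw [hind3]; exact integral_indicator hB10
  have h_31 : IntegrableOn
      (fun ω => Y ω * ((1 - g (X ω)) / g (X ω) / (1 - q (X ω)) * (μ11 (X ω) / μ10 (X ω)) *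
        (μ00 (X ω) / μ10 (X ω))))
      {ω | S ω = 1 ∧ A ω = 0} P := by
    have h' := hint3
    rw [hind3] at h'
    exact (integrable_indicator_iff hB10).mp h'
  have h_32 : IntegrableOn
      (fun ω => μ10 (X ω) * ((1 - g (X ω)) / g (X ω) / (1 - q (X ω)) * (μ11 (X ω) / μ10 (X ω)) *
        (μ00 (X ω) / μ10 (X ω))))
      {ω | S ω = 1 ∧ A ω = 0} P :=
    isVersion_integrable (Z := Y) (m := μ10)
      (φ := fun x => (1 - g x) / g x / (1 - q x) * (μ11 x / μ10 x) * (μ00 x / μ10 x))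
      hX (hY.aestronglyMeasurable.restrict) hμ10obs hφ3m h_31
  have e_31 : ∫ ω in {ω | S ω = 1 ∧ A ω = 0},
        Y ω * ((1 - g (X ω)) / g (X ω) / (1 - q (X ω)) * (μ11 (X ω) / μ10 (X ω)) *
          (μ00 (X ω) / μ10 (X ω))) ∂P
      = ∫ ω in {ω | S ω = 1 ∧ A ω = 0},
        μ10 (X ω) * ((1 - g (X ω)) / g (X ω) / (1 - q (X ω)) * (μ11 (X ω) / μ10 (X ω)) *
          (μ00 (X ω) / μ10 (X ω))) ∂P :=
    isVersion_integral_eq (Z := Y) (m := μ10)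
      (φ := fun x => (1 - g x) / g x / (1 - q x) * (μ11 x / μ10 x) * (μ00 x / μ10 x))
      hX (hY.aestronglyMeasurable.restrict) hμ10obs hφ3m h_31 h_32
  have hψ3m : Measurable fun x =>
      μ10 x * ((1 - g x) / g x / (1 - q x) * (μ11 x / μ10 x) * (μ00 x / μ10 x)) :=
    hμ10m.mul hφ3m
  have hind31 : (fun ω => (1 - A ω) *
        (μ10 (X ω) * ((1 - g (X ω)) / g (X ω) / (1 - q (X ω)) * (μ11 (X ω) / μ10 (X ω)) *
          (μ00 (X ω) / μ10 (X ω)))))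
      = ({ω | A ω = 0}).indicator
          (fun ω => μ10 (X ω) * ((1 - g (X ω)) / g (X ω) / (1 - q (X ω)) *
            (μ11 (X ω) / μ10 (X ω)) * (μ00 (X ω) / μ10 (X ω)))) :=
    one_sub_mul_indicator_eq' A hA01 _
  have e_32 : ∫ ω in {ω | S ω = 1},
        (1 - A ω) * (μ10 (X ω) * ((1 - g (X ω)) / g (X ω) / (1 - q (X ω)) *
          (μ11 (X ω) / μ10 (X ω)) * (μ00 (X ω) / μ10 (X ω)))) ∂P
      = ∫ ω in {ω | S ω = 1 ∧ A ω = 0},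
        μ10 (X ω) * ((1 - g (X ω)) / g (X ω) / (1 - q (X ω)) * (μ11 (X ω) / μ10 (X ω)) *
          (μ00 (X ω) / μ10 (X ω))) ∂P := by
    rw [hind31, setIntegral_indicator hCA0]
    rfl
  have h_33 : IntegrableOn (fun ω => (1 - A ω) *
      (μ10 (X ω) * ((1 - g (X ω)) / g (X ω) / (1 - q (X ω)) * (μ11 (X ω) / μ10 (X ω)) *
        (μ00 (X ω) / μ10 (X ω)))))
      {ω | S ω = 1} P := by
    rw [hind31]
    refine (integrable_indicator_iff hCA0).mpr ?_
    rw [IntegrableOn, Measure.restrict_restrict hCA0,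
      show {ω | A ω = 0} ∩ {ω | S ω = 1} = {ω | S ω = 1 ∧ A ω = 0} from
        by ext ω; exact ⟨fun h => ⟨h.2, h.1⟩, fun h => ⟨h.2, h.1⟩⟩]
    exact h_32
  have h_34 : IntegrableOn (fun ω => (1 - q (X ω)) *
      (μ10 (X ω) * ((1 - g (X ω)) / g (X ω) / (1 - q (X ω)) * (μ11 (X ω) / μ10 (X ω)) *
        (μ00 (X ω) / μ10 (X ω)))))
      {ω | S ω = 1} P :=
    isVersion_integrable (Z := fun ω => 1 - A ω) (m := fun x => 1 - q x)
      (φ := fun x => μ10 x * ((1 - g x) / g x / (1 - q x) * (μ11 x / μ10 x) * (μ00 x / μ10 x)))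
      hX ((measurable_const.sub hA).aestronglyMeasurable.restrict) hq1 hψ3m h_33
  have e_33 : ∫ ω in {ω | S ω = 1},
        (1 - A ω) * (μ10 (X ω) * ((1 - g (X ω)) / g (X ω) / (1 - q (X ω)) *
          (μ11 (X ω) / μ10 (X ω)) * (μ00 (X ω) / μ10 (X ω)))) ∂P
      = ∫ ω in {ω | S ω = 1},
        (1 - q (X ω)) * (μ10 (X ω) * ((1 - g (X ω)) / g (X ω) / (1 - q (X ω)) *
          (μ11 (X ω) / μ10 (X ω)) * (μ00 (X ω) / μ10 (X ω)))) ∂P :=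
    isVersion_integral_eq (Z := fun ω => 1 - A ω) (m := fun x => 1 - q x)
      (φ := fun x => μ10 x * ((1 - g x) / g x / (1 - q x) * (μ11 x / μ10 x) * (μ00 x / μ10 x)))
      hX ((measurable_const.sub hA).aestronglyMeasurable.restrict) hq1 hψ3m h_33 h_34
  have hae3 : ∀ᵐ ω ∂P, ω ∈ {ω | S ω = 1} →
      (1 - q (X ω)) * (μ10 (X ω) * ((1 - g (X ω)) / g (X ω) / (1 - q (X ω)) *
        (μ11 (X ω) / μ10 (X ω)) * (μ00 (X ω) / μ10 (X ω))))
        = (1 - g (X ω)) / g (X ω) * (μ00 (X ω) * (μ11 (X ω) / μ10 (X ω))) := by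
    filter_upwards [hA3] with ω h hmem
    have hc : 1 - q (X ω) ≠ 0 := sub_ne_zero.mpr (ne_of_gt (h hmem).2)
    rw [cancel3' _ _ _ _ _ hc]
    rcases eq_or_ne (μ10 (X ω)) 0 with h0 | h0
    · rw [h0]; simp
    · have h1 : μ10 (X ω) * (μ11 (X ω) / μ10 (X ω)) * (μ00 (X ω) / μ10 (X ω))
          = μ00 (X ω) * (μ11 (X ω) / μ10 (X ω)) := by
        field_simp
      rw [h1]
  have e_34 : ∫ ω in {ω | S ω = 1},
        (1 - q (X ω)) * (μ10 (X ω) * ((1 - g (X ω)) / g (X ω) / (1 - q (X ω)) *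
          (μ11 (X ω) / μ10 (X ω)) * (μ00 (X ω) / μ10 (X ω)))) ∂P
      = ∫ ω in {ω | S ω = 1},
        (1 - g (X ω)) / g (X ω) * (μ00 (X ω) * (μ11 (X ω) / μ10 (X ω))) ∂P :=
    setIntegral_congr_ae hB1 hae3
  have h_35 : IntegrableOn
      (fun ω => (1 - g (X ω)) / g (X ω) * (μ00 (X ω) * (μ11 (X ω) / μ10 (X ω))))
      {ω | S ω = 1} P :=
    h_34.congr ((ae_restrict_iff' hB1).mpr hae3)
  have num3 : ∫ ω, S ω * ((1 - g (X ω)) / g (X ω)) * ((1 - A ω) / (1 - q (X ω))) *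
        (μ11 (X ω) / μ10 (X ω)) * (μ00 (X ω) / μ10 (X ω)) * Y ω ∂P
      = ∫ ω in {ω | S ω = 0}, Y1 ω ∂P := by
    rw [e_30, e_31, ← e_32, e_33, e_34]
    exact tail h_35
  -- ===== conclusion =====
  refine ⟨?_, ?_, ?_⟩
  · simp only [condMean]
    rw [num1]
  · simp only [condMean]
    rw [num2, div_eq_mul_inv, mul_comm]
  · simp only [condMean]
    rw [num3, div_eq_mul_inv, mul_comm]
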